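/- arXiv:2105.11440 — 4 statements merged into one kernel-verified Lean document; each statement's English description precedes it below -/
import Mathlib

section
/- Let n, m ≥ 2 and let F : ℝ₊ⁿ → Sₘ be continuously differentiable, convex and monotonically non-increasing. Let x ∈ ℝ₊ⁿ be such that F'(x)((n−1)e_j' − e_j) ⋠ 0 for all j ∈ {1,…,n}, and set λ := min over j ∈ {1,…,n} of λ_max(F'(x)((n−1)e_j' − e_j)). Then for every d ∈ ℝⁿ: if λ_max(F'(x)d) < λ‖d‖∞/(n−1), then Σ_{j=1}ⁿ d_j > 0. -/
attribute [local instance] Matrix.frobeniusNormedAddCommGroup Matrix.frobeniusNormedSpace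

noncomputable section

/-- The open positive orthant `ℝ₊ⁿ` in `ℝⁿ`. -/
def posOrth (n : ℕ) : Set (Fin n → ℝ) := {x | ∀ i, 0 < x i}

/-- The Loewner order on real matrices: `A ⪯ B` iff `B - A` is positive semidefinite. -/
def loewnerLE {m : ℕ} (A B : Matrix (Fin m) (Fin m) ℝ) : Prop := (B - A).PosSemidef

/-- The largest eigenvalue `λ_max` of a real (symmetric) matrix. -/
noncomputable def lambdaMax {m : ℕ} (A : Matrix (Fin m) (Fin m) ℝ) : ℝ :=
  sSup {r : ℝ | ∃ v : Fin m → ℝ, v ≠ 0 ∧ A.mulVec v = r • v}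

/-- The spectral norm `‖·‖₂` of a real matrix (operator norm on Euclidean space). -/
noncomputable def matSpectralNorm {m : ℕ} (A : Matrix (Fin m) (Fin m) ℝ) : ℝ :=
  ‖LinearMap.toContinuousLinearMap (Matrix.toEuclideanLin A)‖

/-- `e_j`, the `j`-th standard unit vector of `ℝⁿ`. -/
def unitVec (n : ℕ) (j : Fin n) : Fin n → ℝ := Pi.single j 1

/-- `e_j' = 𝟙 - e_j`. -/
def coVec (n : ℕ) (j : Fin n) : Fin n → ℝ := (fun _ => (1:ℝ)) - Pi.single j 1

/-- The direction `(n-1) e_j' - e_j`. -/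
noncomputable def dirVec (n : ℕ) (j : Fin n) : Fin n → ℝ :=
  ((n:ℝ) - 1) • coVec n j - unitVec n j

/-- `z_{j,k} = (a/2) e_j' + (a + k·a/(4(n-1))) e_j`. -/
noncomputable def zVec (n : ℕ) (a : ℝ) (j : Fin n) (k : ℤ) : Fin n → ℝ :=
  (a/2) • coVec n j + (a + (k:ℝ) * a / (4 * ((n:ℝ) - 1))) • unitVec n j

/-- `d_j = ((2b-a)/a)(n-1) e_j' - (1/2) e_j`. -/
noncomputable def dVec (n : ℕ) (a b : ℝ) (j : Fin n) : Fin n → ℝ :=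
  ((2*b - a)/a * ((n:ℝ) - 1)) • coVec n j - (1/2 : ℝ) • unitVec n j

/-- `K = ⌈4(n-1)b/a⌉ - 4n - 3`. -/
noncomputable def Kbound (n : ℕ) (a b : ℝ) : ℤ := ⌈4 * ((n:ℝ) - 1) * b / a⌉ - 4 * (n:ℤ) - 3



open Matrix
open scoped RealInnerProductSpace


variable {m : ℕ}

lemma isHermitian_of_isSymm {A : Matrix (Fin m) (Fin m) ℝ} (hA : A.IsSymm) :
    A.IsHermitian := by
  rwa [Matrix.IsHermitian, Matrix.conjTranspose_eq_transpose_of_trivial]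

lemma inner_eq_dot (x y : EuclideanSpace ℝ (Fin m)) :
    ⟪x, y⟫ = dotProduct (x : Fin m → ℝ) (y : Fin m → ℝ) := by
  rw [EuclideanSpace.inner_eq_star_dotProduct, star_trivial, dotProduct_comm]

lemma quad_le_aux {A : Matrix (Fin m) (Fin m) ℝ} (hA : A.IsHermitian)
    {μ : ℝ} (hμ : ∀ i, hA.eigenvalues i ≤ μ) (v : Fin m → ℝ) :
    v ⬝ᵥ (A *ᵥ v) ≤ μ * (v ⬝ᵥ v) := by
  classical
  have hAT : Aᵀ = A := by
    have h := hA
    rwa [Matrix.IsHermitian, Matrix.conjTranspose_eq_transpose_of_trivial] at h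
  set b := hA.eigenvectorBasis with hb
  let v' : EuclideanSpace ℝ (Fin m) := WithLp.toLp 2 v
  have key : ∀ i, ⟪b i, v'⟫ = (⇑(b i)) ⬝ᵥ v := fun i => inner_eq_dot _ _
  have hbAv : ∀ i, ⟪b i, (WithLp.toLp 2 (A *ᵥ v) : EuclideanSpace ℝ (Fin m))⟫
      = hA.eigenvalues i * ⟪b i, v'⟫ := by
    intro i
    rw [inner_eq_dot]
    show (⇑(b i)) ⬝ᵥ (A *ᵥ v) = _
    rw [dotProduct_mulVec, ← Matrix.mulVec_transpose, hAT, hA.mulVec_eigenvectorBasis,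
      smul_dotProduct, key]
    rfl
  have expand : v ⬝ᵥ (A *ᵥ v) = ∑ i, hA.eigenvalues i * (⟪v', b i⟫ * ⟪b i, v'⟫) := by
    have h1 := b.sum_inner_mul_inner v' (WithLp.toLp 2 (A *ᵥ v) : EuclideanSpace ℝ (Fin m))
    rw [inner_eq_dot] at h1
    refine h1.symm.trans ?_
    refine Finset.sum_congr rfl fun i _ => ?_
    rw [hbAv]; ring
  have parseval : v ⬝ᵥ v = ∑ i, ⟪v', b i⟫ * ⟪b i, v'⟫ := by
    have h1 := b.sum_inner_mul_inner v' v'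
    rw [inner_eq_dot] at h1
    exact h1.symm
  have hsq : ∀ i, 0 ≤ ⟪v', b i⟫ * ⟪b i, v'⟫ := by
    intro i
    rw [real_inner_comm (b i) v']
    exact mul_self_nonneg _
  rw [expand, parseval, Finset.mul_sum]
  exact Finset.sum_le_sum fun i _ => mul_le_mul_of_nonneg_right (hμ i) (hsq i)

lemma isGreatest_lambdaMax (hm : 0 < m) {A : Matrix (Fin m) (Fin m) ℝ} (hA : A.IsSymm) :
    IsGreatest {r : ℝ | ∃ v : Fin m → ℝ, v ≠ 0 ∧ A.mulVec v = r • v} (lambdaMax A) := by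
  classical
  have hH := isHermitian_of_isSymm hA
  have : Nonempty (Fin m) := ⟨⟨0, hm⟩⟩
  obtain ⟨i₀, -, hi₀⟩ := Finset.exists_max_image Finset.univ hH.eigenvalues ⟨⟨0, hm⟩, Finset.mem_univ _⟩
  set μ := hH.eigenvalues i₀ with hμdef
  have hbne : ∀ i, (⇑(hH.eigenvectorBasis i) : Fin m → ℝ) ≠ 0 := by
    intro i h0
    have h1 := hH.eigenvectorBasis.orthonormal.ne_zero i
    exact h1 (by ext j; exact congrFun h0 j)
  have hmem : ∀ i, hH.eigenvalues i ∈
      {r : ℝ | ∃ v : Fin m → ℝ, v ≠ 0 ∧ A.mulVec v = r • v} := fun i =>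
    ⟨_, hbne i, hH.mulVec_eigenvectorBasis i⟩
  have hub : ∀ r ∈ {r : ℝ | ∃ v : Fin m → ℝ, v ≠ 0 ∧ A.mulVec v = r • v}, r ≤ μ := by
    rintro r ⟨v, hv0, hv⟩
    have hq := quad_le_aux hH (fun i => hi₀ i (Finset.mem_univ i)) v
    rw [hv, dotProduct_smul, smul_eq_mul] at hq
    have hvv : 0 < v ⬝ᵥ v := by
      rcases lt_or_eq_of_le (Finset.sum_nonneg (fun i _ => mul_self_nonneg (v i))) with h | h
      · exact h
      · exact absurd (dotProduct_self_eq_zero.mp h.symm) hv0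
    exact le_of_mul_le_mul_right hq hvv
  have hg : IsGreatest {r : ℝ | ∃ v : Fin m → ℝ, v ≠ 0 ∧ A.mulVec v = r • v} μ :=
    ⟨hmem i₀, hub⟩
  have : lambdaMax A = μ := hg.csSup_eq
  rwa [this]

lemma quad_le_lambdaMax (hm : 0 < m) {A : Matrix (Fin m) (Fin m) ℝ} (hA : A.IsSymm)
    (v : Fin m → ℝ) : v ⬝ᵥ (A *ᵥ v) ≤ lambdaMax A * (v ⬝ᵥ v) := by
  classical
  have hH := isHermitian_of_isSymm hA
  have hbne : ∀ i, (⇑(hH.eigenvectorBasis i) : Fin m → ℝ) ≠ 0 := by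
    intro i h0
    have h1 := hH.eigenvectorBasis.orthonormal.ne_zero i
    exact h1 (by ext j; exact congrFun h0 j)
  exact quad_le_aux hH
    (fun i => (isGreatest_lambdaMax hm hA).2 ⟨_, hbne i, hH.mulVec_eigenvectorBasis i⟩) v

lemma lambdaMax_le_of_loewner (hm : 0 < m) {A B : Matrix (Fin m) (Fin m) ℝ}
    (hA : A.IsSymm) (hB : B.IsSymm) (h : (B - A).PosSemidef) :
    lambdaMax A ≤ lambdaMax B := by
  obtain ⟨v, hv0, hv⟩ := (isGreatest_lambdaMax hm hA).1
  have hvv : 0 < v ⬝ᵥ v := by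
    rcases lt_or_eq_of_le (Finset.sum_nonneg (fun i _ => mul_self_nonneg (v i))) with h' | h'
    · exact h'
    · exact absurd (dotProduct_self_eq_zero.mp h'.symm) hv0
  have h1 : v ⬝ᵥ (A *ᵥ v) = lambdaMax A * (v ⬝ᵥ v) := by
    rw [hv, dotProduct_smul, smul_eq_mul]
  have h2 : 0 ≤ v ⬝ᵥ ((B - A) *ᵥ v) := by
    have := h.dotProduct_mulVec_nonneg v
    rwa [star_trivial] at this
  rw [sub_mulVec, dotProduct_sub] at h2
  have h3 := quad_le_lambdaMax hm hB v
  have : lambdaMax A * (v ⬝ᵥ v) ≤ lambdaMax B * (v ⬝ᵥ v) := by linarith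
  exact le_of_mul_le_mul_right this hvv

lemma lambdaMax_pos (hm : 0 < m) {A : Matrix (Fin m) (Fin m) ℝ}
    (hA : A.IsSymm) (h : ¬ (0 - A).PosSemidef) : 0 < lambdaMax A := by
  rw [Matrix.posSemidef_iff_dotProduct_mulVec, not_and_or] at h
  have hherm : (0 - A).IsHermitian := by
    apply isHermitian_of_isSymm
    rw [Matrix.IsSymm] at hA ⊢
    rw [Matrix.transpose_sub, hA, Matrix.transpose_zero]
  rcases h with h | h
  · exact absurd hherm h
  push_neg at h
  obtain ⟨v, hv⟩ := h
  rw [star_trivial, sub_mulVec, zero_mulVec, dotProduct_sub, dotProduct_zero] at hv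
  have hv' : 0 < v ⬝ᵥ (A *ᵥ v) := by linarith
  have hv0 : v ≠ 0 := by
    rintro rfl
    rw [dotProduct_comm, dotProduct_zero] at hv'
    exact lt_irrefl 0 hv'
  have hq := quad_le_lambdaMax hm hA v
  have hvv : 0 < v ⬝ᵥ v := by
    rcases lt_or_eq_of_le (Finset.sum_nonneg (fun i _ => mul_self_nonneg (v i))) with h' | h'
    · exact h'
    · exact absurd (dotProduct_self_eq_zero.mp h'.symm) hv0
  nlinarith

lemma lambdaMax_smul (hm : 0 < m) {A : Matrix (Fin m) (Fin m) ℝ} (hA : A.IsSymm)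
    {t : ℝ} (ht : 0 < t) : lambdaMax (t • A) = t * lambdaMax A := by
  have hg := isGreatest_lambdaMax hm hA
  have hg' : IsGreatest {r : ℝ | ∃ v : Fin m → ℝ, v ≠ 0 ∧ (t • A).mulVec v = r • v}
      (t * lambdaMax A) := by
    constructor
    · obtain ⟨v, hv0, hv⟩ := hg.1
      exact ⟨v, hv0, by rw [smul_mulVec, hv, smul_smul]⟩
    · rintro r ⟨v, hv0, hv⟩
      rw [smul_mulVec] at hv
      have : A *ᵥ v = (r / t) • v := by
        have := congrArg (fun w => t⁻¹ • w) hv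
        simpa [smul_smul, inv_mul_cancel₀ ht.ne', div_eq_inv_mul] using this
      have hr := hg.2 ⟨v, hv0, this⟩
      rw [div_le_iff₀ ht] at hr
      linarith [hr]
  exact hg'.csSup_eq

lemma lambdaMax_zero (hm : 0 < m) : lambdaMax (0 : Matrix (Fin m) (Fin m) ℝ) = 0 := by
  have hg : IsGreatest {r : ℝ | ∃ v : Fin m → ℝ, v ≠ 0 ∧
      (0 : Matrix (Fin m) (Fin m) ℝ).mulVec v = r • v} 0 := by
    constructor
    · refine ⟨Pi.single ⟨0, hm⟩ 1, ?_, by rw [zero_mulVec, zero_smul]⟩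
      intro h
      have := congrFun h ⟨0, hm⟩
      simp at this
    · rintro r ⟨v, hv0, hv⟩
      rw [zero_mulVec] at hv
      rcases smul_eq_zero.mp hv.symm with h | h
      · exact le_of_eq h
      · exact absurd h hv0
  exact hg.csSup_eq



/-- Lemma 2, (8). If `F'(x)((n-1)e_j' - e_j) ⋠ 0` for all `j` and
`λ := min_j λ_max(F'(x)((n-1)e_j' - e_j))`, then `λ_max(F'(x)d) < λ‖d‖_∞/(n-1)` implies
`∑ d_j > 0`. -/
theorem sum_pos_of_lambdaMax_lt {n m : ℕ} (hn : 2 ≤ n) (hm : 2 ≤ m)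
    (F : (Fin n → ℝ) → Matrix (Fin m) (Fin m) ℝ)
    (F' : (Fin n → ℝ) → (Fin n → ℝ) →L[ℝ] Matrix (Fin m) (Fin m) ℝ)
    (hF_symm : ∀ x ∈ posOrth n, (F x).IsSymm)
    (hF'_symm : ∀ x ∈ posOrth n, ∀ d : Fin n → ℝ, (F' x d).IsSymm)
    (hderiv : ∀ x ∈ posOrth n, HasFDerivAt F (F' x) x)
    (hcont : ContinuousOn F' (posOrth n))
    (hmono : ∀ x ∈ posOrth n, ∀ d : Fin n → ℝ, 0 ≤ d → loewnerLE (F' x d) 0)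
    (hconv : ∀ x ∈ posOrth n, ∀ x₀ ∈ posOrth n, loewnerLE (F' x₀ (x - x₀)) (F x - F x₀))
    (x : Fin n → ℝ) (hx : x ∈ posOrth n)
    (hcrit : ∀ j : Fin n, ¬ loewnerLE (F' x (dirVec n j)) 0)
    (lam : ℝ) (hlam : IsLeast {r : ℝ | ∃ j : Fin n, r = lambdaMax (F' x (dirVec n j))} lam) :
    ∀ d : Fin n → ℝ, lambdaMax (F' x d) < lam * ‖d‖ / ((n:ℝ) - 1) → 0 < ∑ j, d j := by
  classical
  have hm0 : 0 < m := by omega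
  have hN1 : (1:ℝ) ≤ (n:ℝ) - 1 := by
    have : (2:ℝ) ≤ (n:ℝ) := by exact_mod_cast hn
    linarith
  have hN0 : (0:ℝ) < (n:ℝ) - 1 := by linarith
  -- lam is positive
  have hlampos : 0 < lam := by
    obtain ⟨j₀, hj₀⟩ := hlam.1
    rw [hj₀]
    exact lambdaMax_pos hm0 (hF'_symm x hx _) (hcrit j₀)
  -- dirVec entries
  have hdir : ∀ j i : Fin n, dirVec n j i = if i = j then (-1 : ℝ) else (n:ℝ) - 1 := by
    intro j i
    simp only [dirVec, coVec, unitVec, Pi.sub_apply, Pi.smul_apply, Pi.single_apply,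
      smul_eq_mul]
    by_cases h : i = j <;> simp [h] <;> ring
  intro d hd
  by_contra hsum
  push_neg at hsum
  -- d ≠ 0 (else contradiction directly)
  have hd0 : d ≠ 0 := by
    rintro rfl
    rw [norm_zero, map_zero, lambdaMax_zero hm0] at hd
    simp at hd
  set M := ‖d‖ with hM
  have hM0 : 0 < M := norm_pos_iff.mpr hd0
  have habs : ∀ i, |d i| ≤ M := by
    intro i
    have := norm_le_pi_norm d i
    rwa [Real.norm_eq_abs] at this
  -- find j with d j ≤ -M/(n-1)
  have hstep : ∃ j : Fin n, d j ≤ -M / ((n:ℝ) - 1) := by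
    have : Nonempty (Fin n) := ⟨⟨0, by omega⟩⟩
    obtain ⟨k, -, hk⟩ := Finset.exists_max_image Finset.univ (fun i => |d i|)
      ⟨⟨0, by omega⟩, Finset.mem_univ _⟩
    have hkM : |d k| = M := by
      refine le_antisymm (habs k) ?_
      rw [hM]
      refine (pi_norm_le_iff_of_nonneg (abs_nonneg _)).mpr fun i => ?_
      rw [Real.norm_eq_abs]
      exact hk i (Finset.mem_univ i)
    rcases le_or_gt (d k) 0 with hdk | hdk
    · refine ⟨k, ?_⟩
      have : d k = -M := by rw [← hkM, abs_of_nonpos hdk, neg_neg]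
      rw [this, neg_div, neg_le_neg_iff]
      exact div_le_self hM0.le hN1
    · have hdkM : d k = M := by rw [← hkM, abs_of_pos hdk]
      have hne : (Finset.univ.erase k).Nonempty := by
        rw [← Finset.card_pos, Finset.card_erase_of_mem (Finset.mem_univ k),
          Finset.card_univ, Fintype.card_fin]
        omega
      obtain ⟨j, hj, hjmin⟩ := Finset.exists_min_image (Finset.univ.erase k) d hne
      refine ⟨j, ?_⟩
      have hsum' : ∑ i ∈ Finset.univ.erase k, d i ≤ -M := by
        have h1 : ∑ i ∈ Finset.univ.erase k, d i + d k = ∑ i, d i :=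
          Finset.sum_erase_add _ _ (Finset.mem_univ k)
        have := hsum
        linarith
      have hcard : ((Finset.univ.erase k).card : ℝ) = (n:ℝ) - 1 := by
        rw [Finset.card_erase_of_mem (Finset.mem_univ k), Finset.card_univ, Fintype.card_fin]
        have : (1:ℕ) ≤ n := by omega
        push_cast [Nat.cast_sub this]
        ring
      have hmin := Finset.card_nsmul_le_sum (Finset.univ.erase k) d (d j)
        (fun i hi => hjmin i hi)
      rw [nsmul_eq_mul] at hmin
      rw [le_div_iff₀ hN0] at *
      · nlinarith [hmin.trans hsum']
  obtain ⟨j, hj⟩ := hstep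
  set t := M / ((n:ℝ) - 1) with ht
  have ht0 : 0 < t := div_pos hM0 hN0
  -- w := t • dirVec n j - d ≥ 0
  set w : Fin n → ℝ := t • dirVec n j - d with hw
  have hw0 : (0 : Fin n → ℝ) ≤ w := by
    intro i
    have hwi : w i = t * dirVec n j i - d i := rfl
    show (0:ℝ) ≤ w i
    rw [hwi, hdir]
    by_cases h : i = j
    · subst h
      rw [if_pos rfl]
      rw [neg_div] at hj
      linarith [hj, ht.le, ht.ge]
    · rw [if_neg h]
      have hc : t * ((n:ℝ) - 1) = M := div_mul_cancel₀ M hN0.ne'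
      have h2 := (abs_le.mp (habs i)).2
      linarith
  -- Loewner comparisons
  have hmw := hmono x hx w hw0
  rw [loewnerLE] at hmw
  have hFd : F' x d - t • F' x (dirVec n j) = 0 - F' x w := by
    rw [hw, map_sub, _root_.map_smul]
    abel
  have hle1 : lambdaMax (t • F' x (dirVec n j)) ≤ lambdaMax (F' x d) := by
    refine lambdaMax_le_of_loewner hm0 ?_ (hF'_symm x hx d) ?_
    · rw [Matrix.IsSymm, Matrix.transpose_smul, (hF'_symm x hx _)]
    · rw [hFd]; exact hmw
  rw [lambdaMax_smul hm0 (hF'_symm x hx _) ht0] at hle1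
  have hle2 : lam ≤ lambdaMax (F' x (dirVec n j)) := hlam.2 ⟨j, rfl⟩
  have : lam * M / ((n:ℝ) - 1) ≤ lambdaMax (F' x d) := by
    calc lam * M / ((n:ℝ) - 1) = t * lam := by rw [ht]; ring
    _ ≤ t * lambdaMax (F' x (dirVec n j)) := by
        exact mul_le_mul_of_nonneg_left hle2 ht0.le
    _ ≤ lambdaMax (F' x d) := hle1
  exact absurd hd (not_lt.mpr this)


end
end

section
/- Let n, m ≥ 2 and let F : ℝ₊ⁿ → Sₘ be continuously differentiable, convex and monotonically non-increasing. Let x ∈ ℝ₊ⁿ be such that F'(x)((n−1)e_j' − e_j) ⋠ 0 for all j ∈ {1,…,n}, and set λ := min over j ∈ {1,…,n} of λ_max(F'(x)((n−1)e_j' − e_j)). Then for every y ∈ ℝ₊ⁿ: if λ_max(F(y) − F(x)) < λ‖y − x‖∞/(n−1), then Σ_{j=1}ⁿ (y_j − x_j) > 0. -/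
attribute [local instance] Matrix.frobeniusNormedAddCommGroup Matrix.frobeniusNormedSpace

noncomputable section

lemma myIsHermitian {m : ℕ} {A : Matrix (Fin m) (Fin m) ℝ} (h : A.IsSymm) :
    A.IsHermitian := by
  rw [Matrix.IsHermitian, Matrix.conjTranspose_eq_transpose_of_trivial]
  exact h

lemma myDotSelfPos {m : ℕ} {v : Fin m → ℝ} (hv : v ≠ 0) : 0 < dotProduct v v := by
  have := Matrix.dotProduct_self_star_pos_iff (v := v)
  simpa using this.mpr hv

lemma myDotSelfNonneg {m : ℕ} (v : Fin m → ℝ) : 0 ≤ dotProduct v v :=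
  Finset.sum_nonneg fun i _ => mul_self_nonneg _

open Matrix in
lemma quadBound {m : ℕ} {A : Matrix (Fin m) (Fin m) ℝ} (hA : A.IsHermitian)
    (μ : ℝ) (hμ : ∀ i, hA.eigenvalues i ≤ μ) (v : Fin m → ℝ) :
    dotProduct v (A.mulVec v) ≤ μ * dotProduct v v := by
  classical
  set U := (hA.eigenvectorUnitary : Matrix (Fin m) (Fin m) ℝ) with hU
  have hUU : U * star U = 1 := (Matrix.mem_unitaryGroup_iff).mp hA.eigenvectorUnitary.2
  have hofReal : (RCLike.ofReal ∘ hA.eigenvalues : Fin m → ℝ) = hA.eigenvalues := by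
    funext i; simp
  have hspec : A = U * Matrix.diagonal hA.eigenvalues * star U := by
    have := hA.spectral_theorem
    rwa [hofReal] at this
  have hdecomp : μ • (1 : Matrix (Fin m) (Fin m) ℝ) - A
      = U * Matrix.diagonal (fun i => μ - hA.eigenvalues i) * Uᴴ := by
    have h1 : Matrix.diagonal (fun i => μ - hA.eigenvalues i)
        = μ • (1 : Matrix (Fin m) (Fin m) ℝ) - Matrix.diagonal hA.eigenvalues := by
      ext i k
      by_cases h : i = k <;>
        simp [Matrix.diagonal_apply, h, Matrix.one_apply, Matrix.sub_apply, Matrix.smul_apply]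
    rw [h1, Matrix.mul_sub, Matrix.sub_mul, ← Matrix.star_eq_conjTranspose, ← hspec]
    congr 1
    rw [Matrix.mul_smul, Matrix.smul_mul, mul_one, hUU]
  have hPSD : (μ • (1 : Matrix (Fin m) (Fin m) ℝ) - A).PosSemidef := by
    rw [hdecomp]
    exact (Matrix.posSemidef_diagonal_iff.mpr
      fun i => sub_nonneg.mpr (hμ i)).mul_mul_conjTranspose_same U
  have := hPSD.dotProduct_mulVec_nonneg v
  simp only [star_trivial, Matrix.sub_mulVec, Matrix.smul_mulVec, Matrix.one_mulVec,
    dotProduct_sub, dotProduct_smul, smul_eq_mul] at this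
  linarith

lemma lambdaMax_spec {m : ℕ} (hm : 1 ≤ m) {A : Matrix (Fin m) (Fin m) ℝ} (hA : A.IsSymm) :
    (∃ v : Fin m → ℝ, v ≠ 0 ∧ A.mulVec v = lambdaMax A • v) ∧
    (∀ v : Fin m → ℝ, dotProduct v (A.mulVec v) ≤ lambdaMax A * dotProduct v v) := by
  have hH := myIsHermitian hA
  have hne : (Finset.univ : Finset (Fin m)).Nonempty := ⟨⟨0, by omega⟩, Finset.mem_univ _⟩
  set μ := Finset.univ.sup' hne hH.eigenvalues with hμdef
  have hμi : ∀ i, hH.eigenvalues i ≤ μ := fun i => Finset.le_sup' _ (Finset.mem_univ i)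
  set E := {r : ℝ | ∃ v : Fin m → ℝ, v ≠ 0 ∧ A.mulVec v = r • v} with hEdef
  have hmem : ∀ i, hH.eigenvalues i ∈ E := by
    intro i
    refine ⟨⇑(hH.eigenvectorBasis i), ?_, hH.mulVec_eigenvectorBasis i⟩
    intro h0
    have h1 := hH.eigenvectorBasis.orthonormal.1 i
    rw [show hH.eigenvectorBasis i = 0 from by ext j; exact congrFun h0 j] at h1
    simp at h1
  have hbdd : ∀ r ∈ E, r ≤ μ := by
    rintro r ⟨v, hv, hAv⟩
    have hq := quadBound hH μ hμi v
    rw [hAv, dotProduct_smul, smul_eq_mul] at hq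
    exact le_of_mul_le_mul_right hq (myDotSelfPos hv)
  have hEb : BddAbove E := ⟨μ, fun r hr => hbdd r hr⟩
  obtain ⟨i0, -, hi0⟩ := Finset.exists_mem_eq_sup' hne hH.eigenvalues
  have hmax : lambdaMax A = μ := by
    apply le_antisymm
    · exact csSup_le ⟨_, hmem i0⟩ hbdd
    · exact le_csSup hEb (show μ ∈ E by rw [hμdef, hi0]; exact hmem i0)
  constructor
  · obtain ⟨v, hv, hAv⟩ := hmem i0
    exact ⟨v, hv, by rw [hmax, hμdef, hi0]; exact hAv⟩
  · intro v
    rw [hmax]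
    exact quadBound hH μ hμi v

lemma dirVec_apply {n : ℕ} (j k : Fin n) :
    dirVec n j k = if k = j then -1 else (n:ℝ) - 1 := by
  by_cases h : k = j <;>
    simp [dirVec, coVec, unitVec, Pi.single_apply, Pi.sub_apply, Pi.smul_apply, h]

/-- Lemma 2, (9). If `F'(x)((n-1)e_j' - e_j) ⋠ 0` for all `j` and
`λ := min_j λ_max(F'(x)((n-1)e_j' - e_j))`, then for `y ∈ ℝ₊ⁿ`,
`λ_max(F(y) - F(x)) < λ‖y - x‖_∞/(n-1)` implies `∑ (y_j - x_j) > 0`. -/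
theorem sum_diff_pos_of_lambdaMax_lt {n m : ℕ} (hn : 2 ≤ n) (hm : 2 ≤ m)
    (F : (Fin n → ℝ) → Matrix (Fin m) (Fin m) ℝ)
    (F' : (Fin n → ℝ) → (Fin n → ℝ) →L[ℝ] Matrix (Fin m) (Fin m) ℝ)
    (hF_symm : ∀ x ∈ posOrth n, (F x).IsSymm)
    (hF'_symm : ∀ x ∈ posOrth n, ∀ d : Fin n → ℝ, (F' x d).IsSymm)
    (hderiv : ∀ x ∈ posOrth n, HasFDerivAt F (F' x) x)
    (hcont : ContinuousOn F' (posOrth n))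
    (hmono : ∀ x ∈ posOrth n, ∀ d : Fin n → ℝ, 0 ≤ d → loewnerLE (F' x d) 0)
    (hconv : ∀ x ∈ posOrth n, ∀ x₀ ∈ posOrth n, loewnerLE (F' x₀ (x - x₀)) (F x - F x₀))
    (x : Fin n → ℝ) (hx : x ∈ posOrth n)
    (hcrit : ∀ j : Fin n, ¬ loewnerLE (F' x (dirVec n j)) 0)
    (lam : ℝ) (hlam : IsLeast {r : ℝ | ∃ j : Fin n, r = lambdaMax (F' x (dirVec n j))} lam) :
    ∀ y ∈ posOrth n, lambdaMax (F y - F x) < lam * ‖y - x‖ / ((n:ℝ) - 1) →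
      0 < ∑ j, (y j - x j) := by
  intro y hy hlt
  by_contra hsum
  push_neg at hsum
  have hn1 : (0:ℝ) < (n:ℝ) - 1 := by
    have : (2:ℝ) ≤ (n:ℝ) := by exact_mod_cast hn
    linarith
  have hm1 : 1 ≤ m := by omega
  set h : Fin n → ℝ := y - x with hh
  have hsum' : ∑ k, h k ≤ 0 := by simpa [hh] using hsum
  obtain ⟨j, -, hjmin⟩ := Finset.exists_min_image Finset.univ h ⟨⟨0, by omega⟩, Finset.mem_univ _⟩
  set s := -h j with hs
  have hjle : h j ≤ 0 := by
    by_contra hc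
    push_neg at hc
    have : (0:ℝ) < ∑ k, h k :=
      Finset.sum_pos (fun k _ => lt_of_lt_of_le hc (hjmin k (Finset.mem_univ k)))
        ⟨j, Finset.mem_univ j⟩
    linarith
  have hs0 : 0 ≤ s := by rw [hs]; linarith
  have hkle : ∀ k, h k ≤ ((n:ℝ) - 1) * s := by
    intro k
    have h2 : h k + ∑ i ∈ Finset.univ.erase k, h i = ∑ i, h i :=
      Finset.add_sum_erase Finset.univ h (Finset.mem_univ k)
    have h1 : ((Finset.univ.erase k).card : ℝ) * h j ≤ ∑ i ∈ Finset.univ.erase k, h i := by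
      have h3 := Finset.card_nsmul_le_sum (Finset.univ.erase k) h (h j)
        (fun i _ => hjmin i (Finset.mem_univ i))
      rw [nsmul_eq_mul] at h3
      exact h3
    have hcard : ((Finset.univ.erase k).card : ℝ) = (n:ℝ) - 1 := by
      rw [Finset.card_erase_of_mem (Finset.mem_univ k), Finset.card_univ, Fintype.card_fin,
        Nat.cast_sub (by omega), Nat.cast_one]
    rw [hcard] at h1
    have : h k ≤ -(((n:ℝ) - 1) * h j) := by linarith
    rw [hs]; linarith
  have hnormle : ‖h‖ ≤ ((n:ℝ) - 1) * s := by
    refine (pi_norm_le_iff_of_nonneg (by positivity)).mpr fun k => ?_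
    rw [Real.norm_eq_abs, abs_le]
    constructor
    · have h1 := hjmin k (Finset.mem_univ k)
      have hn2 : (2:ℝ) ≤ (n:ℝ) := by exact_mod_cast hn
      nlinarith [hs0, hn2, h1, hs]
    · exact hkle k
  -- positivity of lam
  have hlampos : 0 < lam := by
    obtain ⟨j0, hj0⟩ := hlam.1
    rw [hj0]
    by_contra hc
    push_neg at hc
    apply hcrit j0
    have hsymm := hF'_symm x hx (dirVec n j0)
    have hq := (lambdaMax_spec hm1 hsymm).2
    refine Matrix.PosSemidef.of_dotProduct_mulVec_nonneg ?_ ?_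
    · rw [zero_sub]
      exact (myIsHermitian hsymm).neg
    · intro w
      have h1 := hq w
      have h2 : dotProduct w ((F' x (dirVec n j0)).mulVec w) ≤ 0 :=
        le_trans h1 (mul_nonpos_of_nonpos_of_nonneg hc (myDotSelfNonneg w))
      simp only [star_trivial, zero_sub, Matrix.neg_mulVec, dotProduct_neg]
      linarith
  -- eigenvector of M := F' x (dirVec n j)
  obtain ⟨v, hv, hEv⟩ := (lambdaMax_spec hm1 (hF'_symm x hx (dirVec n j))).1
  have hc : 0 < dotProduct v v := myDotSelfPos hv
  -- monotonicity direction
  have hd : (0 : Fin n → ℝ) ≤ s • dirVec n j - h := by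
    intro k
    simp only [Pi.zero_apply, Pi.sub_apply, Pi.smul_apply, smul_eq_mul, dirVec_apply]
    by_cases hk : k = j
    · rw [if_pos hk, hk, hs]; ring_nf; simp
    · rw [if_neg hk]
      have := hkle k
      linarith [hkle k]
  have hP1 := hmono x hx _ hd
  have hP2 := hconv y hy x hx
  have e1 : dotProduct v ((F' x h).mulVec v)
      ≤ dotProduct v ((F y - F x).mulVec v) := by
    have := hP2.dotProduct_mulVec_nonneg v
    rw [← hh] at this
    simp only [star_trivial, Matrix.sub_mulVec, dotProduct_sub] at this ⊢
    linarith
  have e2 : s * dotProduct v ((F' x (dirVec n j)).mulVec v)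
      ≤ dotProduct v ((F' x h).mulVec v) := by
    have h0 := hP1.dotProduct_mulVec_nonneg v
    have hlin : F' x (s • dirVec n j - h) = s • (F' x (dirVec n j)) - F' x h := by
      rw [map_sub, map_smul]
    rw [hlin] at h0
    simp only [star_trivial, zero_sub, Matrix.neg_mulVec, dotProduct_neg,
      Matrix.sub_mulVec, Matrix.smul_mulVec, dotProduct_sub,
      dotProduct_smul, smul_eq_mul] at h0
    linarith
  have e3 : dotProduct v ((F' x (dirVec n j)).mulVec v)
      = lambdaMax (F' x (dirVec n j)) * dotProduct v v := by
    rw [hEv, dotProduct_smul, smul_eq_mul]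
  have e4 : lam ≤ lambdaMax (F' x (dirVec n j)) := hlam.2 ⟨j, rfl⟩
  have hsymmFyx : (F y - F x).IsSymm := (hF_symm y hy).sub (hF_symm x hx)
  have e5 : dotProduct v ((F y - F x).mulVec v)
      ≤ lambdaMax (F y - F x) * dotProduct v v := (lambdaMax_spec hm1 hsymmFyx).2 v
  have e6 : lambdaMax (F y - F x) * dotProduct v v
      < (lam * ‖y - x‖ / ((n:ℝ) - 1)) * dotProduct v v :=
    mul_lt_mul_of_pos_right hlt hc
  clear_value s h
  have key : s * lam * dotProduct v v
      < (lam * ‖y - x‖ / ((n:ℝ) - 1)) * dotProduct v v := by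
    have k1 : s * lam * dotProduct v v
        ≤ s * lambdaMax (F' x (dirVec n j)) * dotProduct v v :=
      mul_le_mul_of_nonneg_right (mul_le_mul_of_nonneg_left e4 hs0) (le_of_lt hc)
    have k2 : s * lambdaMax (F' x (dirVec n j)) * dotProduct v v
        = s * dotProduct v ((F' x (dirVec n j)).mulVec v) := by rw [e3]; ring
    linarith [k1, k2, e1, e2, e5, e6]
  have key2 : s * lam < lam * ‖y - x‖ / ((n:ℝ) - 1) :=
    lt_of_mul_lt_mul_right key (le_of_lt hc)
  exact absurd key2 (by
    push_neg
    rw [div_le_iff₀ hn1]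
    have : ‖y - x‖ ≤ ((n:ℝ) - 1) * s := by rw [← hh]; exact hnormle
    nlinarith [hlampos])


end
end

section
/- Let n, m ≥ 2 and let F : ℝ₊ⁿ → Sₘ be continuously differentiable, convex and monotonically non-increasing. Let x ∈ ℝ₊ⁿ be such that F'(x)((n−1)e_j' − e_j) ⋠ 0 for all j ∈ {1,…,n}. Then for every y ∈ ℝ₊ⁿ with y ≠ x: F(y) ⪯ F(x) implies Σ_{j=1}ⁿ (y_j − x_j) > 0. -/
attribute [local instance] Matrix.frobeniusNormedAddCommGroup Matrix.frobeniusNormedSpace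

noncomputable section

/-- Remark 1, converse monotonicity. If `F'(x)((n-1)e_j' - e_j) ⋠ 0` for all
`j`, then for every `y ∈ ℝ₊ⁿ` with `y ≠ x`, `F(y) ⪯ F(x)` implies `∑ (y_j - x_j) > 0`. -/
theorem converse_monotonicity {n m : ℕ} (hn : 2 ≤ n) (hm : 2 ≤ m)
    (F : (Fin n → ℝ) → Matrix (Fin m) (Fin m) ℝ)
    (F' : (Fin n → ℝ) → (Fin n → ℝ) →L[ℝ] Matrix (Fin m) (Fin m) ℝ)
    (hF_symm : ∀ x ∈ posOrth n, (F x).IsSymm)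
    (hF'_symm : ∀ x ∈ posOrth n, ∀ d : Fin n → ℝ, (F' x d).IsSymm)
    (hderiv : ∀ x ∈ posOrth n, HasFDerivAt F (F' x) x)
    (hcont : ContinuousOn F' (posOrth n))
    (hmono : ∀ x ∈ posOrth n, ∀ d : Fin n → ℝ, 0 ≤ d → loewnerLE (F' x d) 0)
    (hconv : ∀ x ∈ posOrth n, ∀ x₀ ∈ posOrth n, loewnerLE (F' x₀ (x - x₀)) (F x - F x₀))
    (x : Fin n → ℝ) (hx : x ∈ posOrth n)
    (hcrit : ∀ j : Fin n, ¬ loewnerLE (F' x (dirVec n j)) 0) :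
    ∀ y ∈ posOrth n, y ≠ x → loewnerLE (F y) (F x) → 0 < ∑ j, (y j - x j) := by
  intro y hy hyx hle
  by_contra hsum
  push_neg at hsum
  set d : Fin n → ℝ := y - x with hd
  have hd0 : d ≠ 0 := sub_ne_zero.mpr hyx
  have hsum' : ∑ j, d j ≤ 0 := by
    simpa [hd, Finset.sum_sub_distrib] using hsum
  obtain ⟨j, -, hjmin⟩ := Finset.exists_min_image Finset.univ d
    ⟨⟨0, by omega⟩, Finset.mem_univ _⟩
  have hjmin' : ∀ i, d j ≤ d i := fun i => hjmin i (Finset.mem_univ i)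
  have hjneg : d j < 0 := by
    by_contra h
    push_neg at h
    have hall : ∀ i, 0 ≤ d i := fun i => le_trans h (hjmin' i)
    have hz : ∑ i, d i = 0 :=
      le_antisymm hsum' (Finset.sum_nonneg fun i _ => hall i)
    have hz' : ∀ i ∈ Finset.univ, d i = 0 :=
      (Finset.sum_eq_zero_iff_of_nonneg (fun i _ => hall i)).mp hz
    exact hd0 (funext fun i => hz' i (Finset.mem_univ i))
  set α : ℝ := -d j with hα
  have hαpos : 0 < α := by simp [hα]; linarith
  -- key bound : d i ≤ (n-1) * α for all i
  have key : ∀ i : Fin n, d i ≤ ((n:ℝ) - 1) * α := by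
    intro i
    have h1 : d i + ∑ i' ∈ Finset.univ.erase i, d i' = ∑ i', d i' :=
      Finset.add_sum_erase _ _ (Finset.mem_univ i)
    have hcard : (Finset.univ.erase i).card = n - 1 := by
      simp [Finset.card_erase_of_mem]
    have h2 : ((n - 1 : ℕ) : ℝ) * d j ≤ ∑ i' ∈ Finset.univ.erase i, d i' := by
      have := Finset.card_nsmul_le_sum (Finset.univ.erase i) d (d j)
        (fun i' _ => hjmin' i')
      rw [hcard] at this
      simpa only [nsmul_eq_mul] using this
    have hcast : ((n - 1 : ℕ) : ℝ) = (n : ℝ) - 1 := by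
      have : 1 ≤ n := by omega
      push_cast [Nat.cast_sub this]
      ring
    rw [hcast] at h2
    have : d i ≤ -(((n:ℝ) - 1) * d j) := by linarith
    simpa [hα, mul_comm] using this
  -- e := α • dirVec n j - d is nonnegative
  set e : Fin n → ℝ := α • dirVec n j - d with he
  have hdir : ∀ i, dirVec n j i = if i = j then -1 else (n:ℝ) - 1 := by
    intro i
    by_cases h : i = j <;>
      simp [dirVec, coVec, unitVec, h, Pi.single_apply]
  have henn : (0 : Fin n → ℝ) ≤ e := by
    intro i
    by_cases h : i = j
    · simp [he, h, hdir, hα]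
    · have := key i
      simp only [he, Pi.sub_apply, Pi.smul_apply, hdir i, if_neg h, smul_eq_mul,
        Pi.zero_apply]
      linarith [key i]
  -- F' x d ⪯ 0 from convexity and F y ⪯ F x
  have hconv' := hconv y hy x hx
  have hAd : (-(F' x d)).PosSemidef := by
    have h1 : (F y - F x - F' x d).PosSemidef := hconv'
    have h2 : (F x - F y).PosSemidef := hle
    have := h1.add h2
    convert this using 1
    abel
  have hAe : (-(F' x e)).PosSemidef := by
    have := hmono x hx e henn
    simpa [loewnerLE, zero_sub] using this
  have hsumpsd : (-(F' x (α • dirVec n j))).PosSemidef := by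
    have hde : d + e = α • dirVec n j := by
      simp [he]
    have := hAd.add hAe
    rw [← hde, map_add]
    convert this using 1
    abel
  -- scale by α⁻¹
  have hscaled : (α⁻¹ • (-(F' x (α • dirVec n j)))).PosSemidef := by
    refine ⟨?_, ?_⟩
    · have h1 := hsumpsd.1
      unfold Matrix.IsHermitian at *
      rw [Matrix.conjTranspose_smul, h1]
      congr 1
    · intro v
      exact (hsumpsd.smul (inv_nonneg.mpr hαpos.le)).2 v
  have hfinal : loewnerLE (F' x (dirVec n j)) 0 := by
    have heq : α⁻¹ • (-(F' x (α • dirVec n j))) = -(F' x (dirVec n j)) := by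
      rw [map_smul, smul_neg, smul_smul, inv_mul_cancel₀ (ne_of_gt hαpos), one_smul]
    rw [heq] at hscaled
    simpa [loewnerLE, zero_sub] using hscaled
  exact hcrit j hfinal

end
end

section
/- Let n, m ≥ 2, let b ≥ a > 0, and let F : ℝ₊ⁿ → Sₘ be continuously differentiable, convex and monotonically non-increasing. Then for every j ∈ {1,…,n} and every x ∈ [a,b]ⁿ there exists t ∈ [a + a/(2(n−1)), b + a/(2(n−1))] (namely t = x_j + a/(2(n−1))) such that for all δ with 0 ≤ δ ≤ a/(4(n−1)): F'(x)((n−1)e_j' − e_j) ⪰ F'((a/2)e_j' + (t−δ)e_j) d_j, where d_j := ((2b−a)/a)(n−1) e_j' − (1/2) e_j. -/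
attribute [local instance] Matrix.frobeniusNormedAddCommGroup Matrix.frobeniusNormedSpace

noncomputable section

/-- The spectral norm `‖·‖₂` of a real matrix (operator norm on Euclidean space). -/
noncomputable def spectralNorm' {m : ℕ} (A : Matrix (Fin m) (Fin m) ℝ) : ℝ :=
  ‖LinearMap.toContinuousLinearMap (Matrix.toEuclideanLin A)‖

lemma psd_add {m : ℕ} {A B : Matrix (Fin m) (Fin m) ℝ}
    (hA : A.PosSemidef) (hB : B.PosSemidef) : (A + B).PosSemidef :=
  ⟨hA.1.add hB.1, fun x => by
    simpa [mul_add, add_mul] using add_nonneg (hA.2 x) (hB.2 x)⟩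

lemma psd_smul {m : ℕ} {A : Matrix (Fin m) (Fin m) ℝ} {c : ℝ}
    (hc : 0 ≤ c) (hA : A.PosSemidef) : (c • A).PosSemidef := by
  refine ⟨?_, fun x => ?_⟩
  · unfold Matrix.IsHermitian
    rw [Matrix.conjTranspose_smul, hA.1]
    simp
  · exact (Matrix.PosSemidef.smul hA hc).2 x

lemma coVec_same (n : ℕ) (j : Fin n) : coVec n j j = 0 := by
  simp [coVec]
lemma coVec_ne (n : ℕ) {i j : Fin n} (h : i ≠ j) : coVec n j i = 1 := by
  simp [coVec, Pi.single_eq_of_ne h]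
lemma unitVec_same (n : ℕ) (j : Fin n) : unitVec n j j = 1 := by
  simp [unitVec]
lemma unitVec_ne (n : ℕ) {i j : Fin n} (h : i ≠ j) : unitVec n j i = 0 := by
  simp [unitVec, Pi.single_eq_of_ne h]


/-- equation (13). For every `j` and `x ∈ [a,b]ⁿ` there is
`t ∈ [a + a/(2(n-1)), b + a/(2(n-1))]` (namely `t = x_j + a/(2(n-1))`) such that for all
`0 ≤ δ ≤ a/(4(n-1))`:
`F'(x)((n-1)e_j' - e_j) ⪰ F'((a/2)e_j' + (t-δ)e_j) d_j`. -/
theorem exists_shift_loewner_ge {n m : ℕ} (hn : 2 ≤ n) (hm : 2 ≤ m)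
    {a b : ℝ} (ha : 0 < a) (hab : a ≤ b)
    (F : (Fin n → ℝ) → Matrix (Fin m) (Fin m) ℝ)
    (F' : (Fin n → ℝ) → (Fin n → ℝ) →L[ℝ] Matrix (Fin m) (Fin m) ℝ)
    (hF_symm : ∀ x ∈ posOrth n, (F x).IsSymm)
    (hF'_symm : ∀ x ∈ posOrth n, ∀ d : Fin n → ℝ, (F' x d).IsSymm)
    (hderiv : ∀ x ∈ posOrth n, HasFDerivAt F (F' x) x)
    (hcont : ContinuousOn F' (posOrth n))
    (hmono : ∀ x ∈ posOrth n, ∀ d : Fin n → ℝ, 0 ≤ d → loewnerLE (F' x d) 0)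
    (hconv : ∀ x ∈ posOrth n, ∀ x₀ ∈ posOrth n, loewnerLE (F' x₀ (x - x₀)) (F x - F x₀))
    :
    ∀ j : Fin n, ∀ x ∈ Set.Icc (fun _ => a) (fun _ => b : Fin n → ℝ),
      ∃ t : ℝ, t = x j + a / (2 * ((n:ℝ) - 1)) ∧
        t ∈ Set.Icc (a + a / (2 * ((n:ℝ) - 1))) (b + a / (2 * ((n:ℝ) - 1))) ∧
        ∀ δ : ℝ, 0 ≤ δ → δ ≤ a / (4 * ((n:ℝ) - 1)) →
          loewnerLE (F' ((a/2) • coVec n j + (t - δ) • unitVec n j) (dVec n a b j))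
            (F' x (dirVec n j)) := by
  intro j x hx
  obtain ⟨hxa', hxb'⟩ := hx
  have hxa : ∀ i, a ≤ x i := fun i => hxa' i
  have hxb : ∀ i, x i ≤ b := fun i => hxb' i
  have hN : (1:ℝ) ≤ (n:ℝ) - 1 := by
    have : (2:ℝ) ≤ (n:ℝ) := by exact_mod_cast hn
    linarith
  have hN0 : (0:ℝ) < (n:ℝ) - 1 := lt_of_lt_of_le one_pos hN
  have hN0' : ((n:ℝ) - 1) ≠ 0 := ne_of_gt hN0
  have ha' : a ≠ 0 := ne_of_gt ha
  refine ⟨x j + a / (2 * ((n:ℝ) - 1)), rfl, ⟨by linarith [hxa j], by linarith [hxb j]⟩, ?_⟩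
  intro δ hδ0 hδ1
  have hδ1' : 4 * ((n:ℝ) - 1) * δ ≤ a := by
    rw [le_div_iff₀ (by positivity)] at hδ1; linarith
  set y : Fin n → ℝ :=
    (a/2) • coVec n j + (x j + a / (2 * ((n:ℝ) - 1)) - δ) • unitVec n j with hydef
  have hy_j : y j = x j + a / (2 * ((n:ℝ) - 1)) - δ := by
    simp [hydef, coVec_same, unitVec_same]
  have hy_ne : ∀ i, i ≠ j → y i = a / 2 := by
    intro i hi
    simp [hydef, coVec_ne n hi, unitVec_ne n hi]
  have hxpos : x ∈ posOrth n := fun i => lt_of_lt_of_le ha (hxa i)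
  have hδle : δ ≤ a / (2 * ((n:ℝ) - 1)) := by
    refine le_trans hδ1 ?_
    apply div_le_div_of_nonneg_left ha.le (by positivity) (by linarith)
  have hypos : y ∈ posOrth n := by
    intro i
    by_cases hi : i = j
    · rw [hi, hy_j]
      have := hxa j
      linarith
    · rw [hy_ne i hi]
      positivity
  have hc : (0:ℝ) ≤ 2 * ((n:ℝ) - 1) / a := by positivity
  -- h1 : d_j - c (x - y) ≥ 0
  have h1 : (0 : Fin n → ℝ) ≤ dVec n a b j - (2 * ((n:ℝ) - 1) / a) • (x - y) := by
    intro i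
    simp only [Pi.zero_apply, Pi.sub_apply, Pi.smul_apply, smul_eq_mul]
    by_cases hi : i = j
    · subst hi
      rw [hy_j]
      simp only [dVec, Pi.sub_apply, Pi.smul_apply, smul_eq_mul, coVec_same, unitVec_same]
      have key : (2*b - a)/a * ((n:ℝ) - 1) * 0 - 1/2 * 1
          - 2 * ((n:ℝ) - 1) / a * (x i - (x i + a / (2 * ((n:ℝ) - 1)) - δ))
          = (a - 4 * ((n:ℝ) - 1) * δ) / (2 * a) := by
        field_simp
        ring
      rw [key]
      apply div_nonneg (by linarith) (by positivity)
    · rw [hy_ne i hi]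
      simp only [dVec, Pi.sub_apply, Pi.smul_apply, smul_eq_mul, coVec_ne n hi, unitVec_ne n hi]
      have key : (2*b - a)/a * ((n:ℝ) - 1) * 1 - 1/2 * 0
          - 2 * ((n:ℝ) - 1) / a * (x i - a / 2)
          = 2 * ((n:ℝ) - 1) * (b - x i) / a := by
        field_simp
        ring
      rw [key]
      have := hxb i
      apply div_nonneg (by nlinarith) ha.le
  -- h2 : c (x - y) - dir ≥ 0
  have h2 : (0 : Fin n → ℝ) ≤ (2 * ((n:ℝ) - 1) / a) • (x - y) - dirVec n j := by
    intro i
    simp only [Pi.zero_apply, Pi.sub_apply, Pi.smul_apply, smul_eq_mul]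
    by_cases hi : i = j
    · subst hi
      rw [hy_j]
      simp only [dirVec, Pi.sub_apply, Pi.smul_apply, smul_eq_mul, coVec_same, unitVec_same]
      have key : 2 * ((n:ℝ) - 1) / a * (x i - (x i + a / (2 * ((n:ℝ) - 1)) - δ))
          - (((n:ℝ) - 1) * 0 - 1)
          = 2 * ((n:ℝ) - 1) * δ / a := by
        field_simp
        ring
      rw [key]
      positivity
    · rw [hy_ne i hi]
      simp only [dirVec, Pi.sub_apply, Pi.smul_apply, smul_eq_mul, coVec_ne n hi, unitVec_ne n hi]
      have key : 2 * ((n:ℝ) - 1) / a * (x i - a / 2) - (((n:ℝ) - 1) * 1 - 0)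
          = 2 * ((n:ℝ) - 1) * (x i - a) / a := by
        field_simp
        ring
      rw [key]
      have := hxa i
      apply div_nonneg (by nlinarith) ha.le
  have P1 : ((0:Matrix (Fin m) (Fin m) ℝ)
      - F' y (dVec n a b j - (2 * ((n:ℝ) - 1) / a) • (x - y))).PosSemidef :=
    hmono y hypos _ h1
  have P2 : (F x - F y - F' y (x - y)).PosSemidef := hconv x hxpos y hypos
  have P3 : (F y - F x - F' x (y - x)).PosSemidef := hconv y hypos x hxpos
  have P4 : ((0:Matrix (Fin m) (Fin m) ℝ)
      - F' x ((2 * ((n:ℝ) - 1) / a) • (x - y) - dirVec n j)).PosSemidef :=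
    hmono x hxpos _ h2
  show (F' x (dirVec n j) - F' y (dVec n a b j)).PosSemidef
  have key : F' x (dirVec n j) - F' y (dVec n a b j)
      = (((0:Matrix (Fin m) (Fin m) ℝ)
            - F' y (dVec n a b j - (2 * ((n:ℝ) - 1) / a) • (x - y)))
          + (2 * ((n:ℝ) - 1) / a) • (F x - F y - F' y (x - y)))
        + ((2 * ((n:ℝ) - 1) / a) • (F y - F x - F' x (y - x))
          + ((0:Matrix (Fin m) (Fin m) ℝ)
            - F' x ((2 * ((n:ℝ) - 1) / a) • (x - y) - dirVec n j))) := by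
    have e1 : y - x = -(x - y) := by abel
    rw [e1]
    simp only [map_sub, map_smul, map_neg]
    module
  rw [key]
  exact psd_add (psd_add P1 (psd_smul hc P2)) (psd_add (psd_smul hc P3) P4)

end
end
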